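/- (Auxiliary to Theorem 3.4) Under the hypotheses below, the derivative e′ restricted to (t₁, t₂) attains a strict global minimum at s, and for every sufficiently small h > 0 there exists a unique point a(h) ∈ (t₁ + h, t₂) such that e′(a(h) − h) = e′(a(h)); moreover a(h) − h < s < a(h), and a(h) → s as h → 0. -/

import Mathlib

open Set Filter Topology

/-- auxiliary to Theorem 3.4: the derivative `e′` attains a strict
global minimum on `(t₁, t₂)` at the inflection point `s`; for small `h > 0` there is a
unique `a(h) ∈ (t₁ + h, t₂)` with `e′(a(h) − h) = e′(a(h))`, it satisfies
`a(h) − h < s < a(h)`, and `a(h) → s` as `h → 0`. -/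
theorem inflection_point_balance (e : ℝ → ℝ)
    (hper : ∀ t, e (t + 1) = e t)
    (hC2 : ContDiff ℝ 2 e)
    (t₁ t₂ : ℝ) (h12 : t₁ < t₂) (h21 : t₂ < t₁ + 1)
    (hmax : ∀ t, e t ≤ e t₁) (hmin : ∀ t, e t₂ ≤ e t)
    (hdec : StrictAntiOn e (Ioo t₁ t₂))
    (s : ℝ) (hs : s ∈ Ioo t₁ t₂)
    (hconc : ∀ u ∈ Ioo t₁ s, deriv (deriv e) u < 0)
    (hconv : ∀ u ∈ Ioo s t₂, 0 < deriv (deriv e) u) :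
    (∀ u ∈ Ioo t₁ t₂, u ≠ s → deriv e s < deriv e u) ∧
    (∃ h₀ > (0:ℝ), ∀ h : ℝ, 0 < h → h ≤ h₀ →
      (∃! a : ℝ, a ∈ Ioo (t₁ + h) t₂ ∧ deriv e (a - h) = deriv e a) ∧
      (∀ a ∈ Ioo (t₁ + h) t₂, deriv e (a - h) = deriv e a → a - h < s ∧ s < a)) ∧
    (∀ ε > (0:ℝ), ∃ h₁ > (0:ℝ), ∀ h : ℝ, 0 < h → h < h₁ →
      ∀ a ∈ Ioo (t₁ + h) t₂, deriv e (a - h) = deriv e a → |a - s| < ε) := by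
  set f := deriv e with hfdef
  have hC1 : ContDiff ℝ 1 f := by
    have h2 : ContDiff ℝ ((1:ℕ∞) + 1) e := by
      convert hC2 using 2
      norm_num
    exact (contDiff_succ_iff_deriv.mp h2).2.2
  have hfc : Continuous f := hC1.continuous
  have hanti : StrictAntiOn f (Icc t₁ s) := by
    apply strictAntiOn_of_deriv_neg (convex_Icc _ _) hfc.continuousOn
    intro x hx
    rw [interior_Icc] at hx
    exact hconc x hx
  have hmono : StrictMonoOn f (Icc s t₂) := by
    apply strictMonoOn_of_deriv_pos (convex_Icc _ _) hfc.continuousOn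
    intro x hx
    rw [interior_Icc] at hx
    exact hconv x hx
  obtain ⟨hs1, hs2⟩ := hs
  -- sandwich: any solution satisfies a - h < s < a
  have sand : ∀ h : ℝ, 0 < h → ∀ a ∈ Ioo (t₁ + h) t₂, f (a - h) = f a →
      a - h < s ∧ s < a := by
    intro h hh a ha heq
    obtain ⟨ha1, ha2⟩ := ha
    constructor
    · by_contra hcon
      push_neg at hcon
      have : f (a - h) < f a :=
        hmono ⟨hcon, by linarith⟩ ⟨by linarith, ha2.le⟩ (by linarith)
      linarith
    · by_contra hcon
      push_neg at hcon
      have : f a < f (a - h) :=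
        hanti ⟨by linarith, by linarith⟩ ⟨by linarith, hcon⟩ (by linarith)
      linarith
  refine ⟨?_, ?_, ?_⟩
  · -- strict global minimum at s
    intro u hu hne
    rcases lt_or_gt_of_ne hne with hlt | hgt
    · exact hanti ⟨hu.1.le, hlt.le⟩ ⟨hs1.le, le_rfl⟩ hlt
    · exact hmono ⟨le_rfl, hs2.le⟩ ⟨hgt.le, hu.2.le⟩ hgt
  · -- existence and uniqueness for small h
    refine ⟨min (s - t₁) (t₂ - s), by simp [hs1, hs2, sub_pos], ?_⟩
    intro h hh hle
    have hle1 : h ≤ s - t₁ := le_trans hle (min_le_left _ _)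
    have hle2 : h ≤ t₂ - s := le_trans hle (min_le_right _ _)
    constructor
    · -- existence
      have hgl : f (t₁ + h) - f (t₁ + h - h) < 0 := by
        have : f (t₁ + h) < f t₁ :=
          hanti ⟨le_rfl, hs1.le⟩ ⟨by linarith, by linarith⟩ (by linarith)
        have he : t₁ + h - h = t₁ := by ring
        rw [he]; linarith
      have hgr : 0 < f t₂ - f (t₂ - h) := by
        have : f (t₂ - h) < f t₂ :=
          hmono ⟨by linarith, by linarith⟩ ⟨hs2.le, le_rfl⟩ (by linarith)
        linarith
      have hcont : ContinuousOn (fun a => f a - f (a - h)) (Icc (t₁ + h) t₂) :=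
        (hfc.sub (hfc.comp (continuous_id.sub continuous_const))).continuousOn
      have hsub := intermediate_value_Ioo (by linarith : t₁ + h ≤ t₂) hcont
      have h0mem : (0:ℝ) ∈ Ioo (f (t₁ + h) - f (t₁ + h - h)) (f t₂ - f (t₂ - h)) :=
        ⟨hgl, hgr⟩
      obtain ⟨a, ha, haeq⟩ := hsub h0mem
      have heq : f (a - h) = f a := by
        simp only at haeq; linarith
      refine ⟨a, ⟨ha, heq⟩, ?_⟩
      -- uniqueness
      intro b ⟨hb, hbeq⟩
      obtain ⟨hb1, hb2⟩ := sand h hh b hb hbeq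
      obtain ⟨ha1, ha2⟩ := sand h hh a ha heq
      by_contra hne
      rcases lt_or_gt_of_ne hne with hlt | hgt
      · have h1 : f b < f a := hmono ⟨hb2.le, hb.2.le⟩ ⟨ha2.le, ha.2.le⟩ hlt
        have h2 : f (a - h) < f (b - h) :=
          hanti ⟨by linarith [hb.1], hb1.le⟩ ⟨by linarith [ha.1], ha1.le⟩ (by linarith)
        linarith
      · have h1 : f a < f b := hmono ⟨ha2.le, ha.2.le⟩ ⟨hb2.le, hb.2.le⟩ hgt
        have h2 : f (b - h) < f (a - h) :=
          hanti ⟨by linarith [ha.1], ha1.le⟩ ⟨by linarith [hb.1], hb1.le⟩ (by linarith)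
        linarith
    · exact sand h hh
  · -- convergence
    intro ε hε
    refine ⟨ε, hε, ?_⟩
    intro h hh hhε a ha heq
    obtain ⟨hl, hr⟩ := sand h hh a ha heq
    rw [abs_lt]
    constructor <;> linarith
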